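/- Radial alignment constraint elimination: let X̃ ∈ ℝ³, Λ ∈ SO(3), c = (c_x, c_y) ∈ ℝ², f, z ∈ ℝ with z ≠ 0, and u, v ∈ ℝ. Suppose z·(u − c_x, v − c_y, 1)ᵀ = diag(f, f, 1) Λᵀ X̃. Write ΛᵀX̃ = (X, Y, Z)ᵀ with the second row γ₂·X̃ := γ₂₁X̃₁+γ₂₂X̃₂+γ₂₃X̃₃ ≠ 0. Then (u − c_x)·(γ₂₁X̃₁+γ₂₂X̃₂+γ₂₃X̃₃) = (v − c_y)·(γ₁₁X̃₁+γ₁₂X̃₂+γ₁₃X̃₃), where γ_{ij} is the (i,j) entry of Λᵀ. -/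
import Mathlib


open Matrix

/-- Radial alignment constraint: eliminating the depth z and the point-wise
focal length f from the projection equation
z (u−c_x, v−c_y, 1)ᵀ = diag(f,f,1) Λᵀ X̃ yields
(u−c_x)(γ₂₁X̃₁+γ₂₂X̃₂+γ₂₃X̃₃) = (v−c_y)(γ₁₁X̃₁+γ₁₂X̃₂+γ₁₃X̃₃). -/
theorem stmt_18 (Xt : Fin 3 → ℝ) (Λ : Matrix (Fin 3) (Fin 3) ℝ)
    (hΛ : Λ ∈ Matrix.specialOrthogonalGroup (Fin 3) ℝ)
    (cx cy f z u v : ℝ) (hz : z ≠ 0)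
    (hproj : z • ![u - cx, v - cy, 1] =
      Matrix.diagonal ![f, f, 1] *ᵥ (Λᵀ *ᵥ Xt))
    (hden : Λᵀ 1 0 * Xt 0 + Λᵀ 1 1 * Xt 1 + Λᵀ 1 2 * Xt 2 ≠ 0) :
    (u - cx) * (Λᵀ 1 0 * Xt 0 + Λᵀ 1 1 * Xt 1 + Λᵀ 1 2 * Xt 2) =
    (v - cy) * (Λᵀ 0 0 * Xt 0 + Λᵀ 0 1 * Xt 1 + Λᵀ 0 2 * Xt 2) := by
  have h0 := congrFun hproj 0
  have h1 := congrFun hproj 1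
  simp [mulVec, dotProduct, Fin.sum_univ_three, diagonal, Matrix.transpose] at h0 h1
  simp only [Matrix.transpose_apply]
  refine mul_left_cancel₀ hz ?_
  linear_combination (Λ 0 1 * Xt 0 + Λ 1 1 * Xt 1 + Λ 2 1 * Xt 2) * h0 -
    (Λ 0 0 * Xt 0 + Λ 1 0 * Xt 1 + Λ 2 0 * Xt 2) * h1
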